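/- arXiv:1412.1871 — 6 statements merged into one kernel-verified Lean document; each statement's English description precedes it below -/
import Mathlib

section
/- Let k be a field and (P, ⪯) a totally ordered set. For intervals I and J of P, there exists a nonzero morphism of persistence modules from the interval module k_I to the interval module k_J if and only if I has good intersection with J; and in that case every morphism k_I → k_J is a scalar multiple of the morphism φ_{I,J} defined by φ_{I,J}(p) = id_k for p ∈ I ∩ J and φ_{I,J}(p) = 0 otherwise (so the space of morphisms k_I → k_J is one-dimensional). -/
set_option linter.unusedSectionVars false

open Classical

universe u v w w'

section Persistence

variable (k : Type u) [Field k] (P : Type v) [LinearOrder P]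

/-- A persistence module over the poset `P`: a functor assigning to each `p : P` a
`k`-vector space and to each pair `p ⪰ p'` a linear map `M p → M p'`. -/
structure PersistenceModule where
  carrier : P → Type w
  [acg : ∀ p, AddCommGroup (carrier p)]
  [mod : ∀ p, Module k (carrier p)]
  map : ∀ {p p' : P}, p' ≤ p → (carrier p →ₗ[k] carrier p')
  map_id : ∀ p : P, map (le_refl p) = LinearMap.id
  map_comp : ∀ {p p' p'' : P} (h1 : p'' ≤ p') (h2 : p' ≤ p),
      (map h1).comp (map h2) = map (h1.trans h2)

attribute [instance] PersistenceModule.acg PersistenceModule.mod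

variable {k P}

/-- A morphism of persistence modules. -/
structure PersistenceHom (M : PersistenceModule.{u,v,w} k P)
    (N : PersistenceModule.{u,v,w'} k P) where
  f : ∀ p : P, M.carrier p →ₗ[k] N.carrier p
  comm : ∀ {p p' : P} (h : p' ≤ p), (N.map h).comp (f p) = (f p').comp (M.map h)

/-- An isomorphism of persistence modules. -/
structure PersistenceIso (M : PersistenceModule.{u,v,w} k P)
    (N : PersistenceModule.{u,v,w'} k P) where
  e : ∀ p : P, M.carrier p ≃ₗ[k] N.carrier p
  comm : ∀ {p p' : P} (h : p' ≤ p) (x : M.carrier p), e p' (M.map h x) = N.map h (e p x)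

variable (P)

/-- An interval of `P`: a nonempty convex subset. -/
def IsInterval (I : Set P) : Prop :=
  I.Nonempty ∧ ∀ ⦃a b c : P⦄, a ∈ I → c ∈ I → a ≤ b → b ≤ c → b ∈ I

variable (k)

/-- The fibre of the interval module `k_I` at `p`: a copy of `k` if `p ∈ I`, zero otherwise. -/
noncomputable def intervalCarrier (I : Set P) (p : P) : Submodule k k :=
  if p ∈ I then ⊤ else ⊥

theorem intervalCarrier_eq_zero {I : Set P} {p : P} (hp : p ∉ I)
    (x : intervalCarrier k P I p) : (x : k) = 0 := by
  have hx := x.2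
  simp only [intervalCarrier, if_neg hp, Submodule.mem_bot] at hx
  exact hx

/-- The structure maps of the interval module. -/
noncomputable def intervalMapAux (I : Set P) (p p' : P) :
    intervalCarrier k P I p →ₗ[k] intervalCarrier k P I p' where
  toFun x := ⟨if p' ∈ I then (x : k) else 0, by
    split_ifs with h
    · simp [intervalCarrier, h]
    · exact (intervalCarrier k P I p').zero_mem⟩
  map_add' x y := by
    apply Subtype.ext
    by_cases h : p' ∈ I <;> simp [h]
  map_smul' c x := by
    apply Subtype.ext
    by_cases h : p' ∈ I <;> simp [h]

/-- The interval module `k_I` associated to an interval `I ⊆ P`. -/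
noncomputable def intervalModule (I : Set P) (hI : IsInterval P I) :
    PersistenceModule.{u,v,u} k P where
  carrier p := intervalCarrier k P I p
  map {p p'} _ := intervalMapAux k P I p p'
  map_id p := by
    ext x
    by_cases h : p ∈ I
    · simp [intervalMapAux, h]
    · have hx := intervalCarrier_eq_zero k P h x
      simp [intervalMapAux, h, hx]
  map_comp {p p' p''} h1 h2 := by
    ext x
    by_cases h'' : p'' ∈ I
    · by_cases h' : p' ∈ I
      · simp [intervalMapAux, h', h'']
      · have hp : p ∉ I := fun hp => h' (hI.2 h'' hp h1 h2)
        have hx := intervalCarrier_eq_zero k P hp x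
        simp [intervalMapAux, h', h'', hx]
    · simp [intervalMapAux, h'']

/-- The pointwise direct sum of a family of persistence modules. -/
noncomputable def directSumPM {A : Type w'} (Ms : A → PersistenceModule.{u,v,w} k P) :
    PersistenceModule k P where
  carrier p := Π₀ a, (Ms a).carrier p
  map h := DFinsupp.mapRange.linearMap (fun a => (Ms a).map h)
  map_id p := by
    try dsimp only
    have h : (fun a => (Ms a).map (le_refl p)) = fun a => LinearMap.id := by
      funext a; exact (Ms a).map_id p
    rw [h, DFinsupp.mapRange.linearMap_id]
  map_comp h1 h2 := by
    try dsimp only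
    rw [← DFinsupp.mapRange.linearMap_comp]
    congr 1
    funext a
    exact (Ms a).map_comp h1 h2

end Persistence

section Statement0

variable (k : Type u) [Field k] (P : Type v) [LinearOrder P]

/-- `I` has good intersection with `J`. -/
def GoodIntersection (I J : Set P) : Prop :=
  (I ∩ J).Nonempty ∧ (∀ p ∈ I, ∃ p' ∈ J, p ≤ p') ∧ (∀ p' ∈ J, ∃ p ∈ I, p ≤ p')

/-- The canonical family of linear maps `φ_{I,J}` : identity of `k` on `I ∩ J`, zero elsewhere. -/
noncomputable def phiAux (I J : Set P) (p : P) :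
    intervalCarrier k P I p →ₗ[k] intervalCarrier k P J p where
  toFun x := ⟨if p ∈ I ∩ J then (x : k) else 0, by
    split_ifs with h
    · simp [intervalCarrier, h.2]
    · exact (intervalCarrier k P J p).zero_mem⟩
  map_add' x y := by
    apply Subtype.ext
    by_cases h : p ∈ I ∩ J <;> simp [h]
  map_smul' c x := by
    apply Subtype.ext
    by_cases h : p ∈ I ∩ J <;> simp [h]


section AuxLemmas

variable {k P}

/-- The underlying scalar of an element of the fibre. -/
def vl {I : Set P} {p : P} (x : intervalCarrier k P I p) : k := (x : k)

lemma vl_injective {I : Set P} {p : P} : Function.Injective (vl (k := k) (P := P) (I := I) (p := p)) :=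
  fun _ _ h => Subtype.ext h

@[simp] lemma vl_zero {I : Set P} {p : P} : vl (0 : intervalCarrier k P I p) = 0 := rfl

@[simp] lemma vl_smul {I : Set P} {p : P} (c : k) (x : intervalCarrier k P I p) :
    vl (c • x) = c * vl x := rfl

/-- The canonical element `1` of the fibre over a point of the interval. -/
noncomputable def oneElt (I : Set P) {p : P} (h : p ∈ I) : intervalCarrier k P I p :=
  ⟨1, by simp [intervalCarrier, h]⟩

lemma oneElt_val (I : Set P) {p : P} (h : p ∈ I) : vl (oneElt (k := k) I h) = 1 := rfl

lemma eq_smul_oneElt {I : Set P} {p : P} (h : p ∈ I) (x : intervalCarrier k P I p) :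
    x = vl x • oneElt I h := by
  apply Subtype.ext
  simp [oneElt, vl]

lemma eq_zero_of_not_mem {I : Set P} {p : P} (h : p ∉ I) (x : intervalCarrier k P I p) :
    x = 0 := Subtype.ext (intervalCarrier_eq_zero k P h x)

lemma intervalModule_map_val {I : Set P} (hI : IsInterval P I) {p p' : P} (h : p' ≤ p)
    (x : intervalCarrier k P I p) :
    vl ((intervalModule k P I hI).map h x) = if p' ∈ I then vl x else 0 := rfl

lemma phiAux_val (I J : Set P) (p : P) (x : intervalCarrier k P I p) :
    vl (phiAux k P I J p x) = if p ∈ I ∩ J then vl x else 0 := rfl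

lemma hom_val {I J : Set P} {hI : IsInterval P I} {hJ : IsInterval P J}
    (f : PersistenceHom (intervalModule k P I hI) (intervalModule k P J hJ))
    {p : P} (hp : p ∈ I) (x : intervalCarrier k P I p) :
    vl (f.f p x) = vl x * vl (f.f p (oneElt I hp)) := by
  have e1 := congrArg (fun y => vl (f.f p y)) (eq_smul_oneElt hp x)
  have e2 := congrArg vl ((f.f p).map_smul (vl x) (oneElt I hp))
  exact e1.trans (e2.trans rfl)

/-- The "scalar" of `f` is constant on `I ∩ J` (one-sided version). -/
lemma hom_const_aux {I J : Set P} {hI : IsInterval P I} {hJ : IsInterval P J}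
    (f : PersistenceHom (intervalModule k P I hI) (intervalModule k P J hJ))
    {p q : P} (hpI : p ∈ I) (hpJ : p ∈ J) (hqI : q ∈ I) (h : p ≤ q) :
    vl (f.f p (oneElt I hpI)) = vl (f.f q (oneElt I hqI)) := by
  have hc := f.comm h
  have hc' := congrArg (fun g => vl (g (oneElt I hqI))) hc
  change vl ((intervalModule k P J hJ).map h (f.f q (oneElt I hqI)))
    = vl (f.f p ((intervalModule k P I hI).map h (oneElt I hqI))) at hc'
  have h1 : ((intervalModule k P I hI).map h (oneElt I hqI)) = oneElt I hpI := by
    apply vl_injective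
    rw [intervalModule_map_val hI h, oneElt_val, oneElt_val, if_pos hpI]
  rw [h1] at hc'
  rw [← hc']
  exact (intervalModule_map_val hJ h _).trans (if_pos hpJ)

lemma hom_const {I J : Set P} {hI : IsInterval P I} {hJ : IsInterval P J}
    (f : PersistenceHom (intervalModule k P I hI) (intervalModule k P J hJ))
    {p q : P} (hpI : p ∈ I) (hpJ : p ∈ J) (hqI : q ∈ I) (hqJ : q ∈ J) :
    vl (f.f p (oneElt I hpI)) = vl (f.f q (oneElt I hqI)) := by
  rcases le_total p q with h | h
  · exact hom_const_aux f hpI hpJ hqI h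
  · exact (hom_const_aux f hqI hqJ hpI h).symm

lemma hom_zero_of_not_mem {I J : Set P} {hI : IsInterval P I} {hJ : IsInterval P J}
    (f : PersistenceHom (intervalModule k P I hI) (intervalModule k P J hJ))
    {p : P} (hp : p ∉ I ∨ p ∉ J) : f.f p = 0 := by
  ext x
  rcases hp with hp | hp
  · rw [eq_zero_of_not_mem hp x]; exact (f.f p).map_zero
  · have := eq_zero_of_not_mem hp (f.f p x)
    rw [this]; rfl

end AuxLemmas

/-- there is a nonzero morphism of persistence modules `k_I → k_J` if and only if
`I` has good intersection with `J`; in that case `φ_{I,J}` is a morphism and every morphism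
`k_I → k_J` is a scalar multiple of it (so the space of morphisms is one-dimensional). -/
theorem statement0 (I J : Set P) (hI : IsInterval P I) (hJ : IsInterval P J) :
    ((∃ f : PersistenceHom (intervalModule k P I hI) (intervalModule k P J hJ),
        ∃ p : P, f.f p ≠ 0) ↔ GoodIntersection P I J) ∧
    (GoodIntersection P I J →
      ∃ Φ : PersistenceHom (intervalModule k P I hI) (intervalModule k P J hJ),
        (∀ p : P, Φ.f p = phiAux k P I J p) ∧ (∃ p : P, Φ.f p ≠ 0) ∧
        ∀ f : PersistenceHom (intervalModule k P I hI) (intervalModule k P J hJ),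
          ∃ c : k, ∀ p : P, f.f p = c • Φ.f p) := by
  have part2 : GoodIntersection P I J →
      ∃ Φ : PersistenceHom (intervalModule k P I hI) (intervalModule k P J hJ),
        (∀ p : P, Φ.f p = phiAux k P I J p) ∧ (∃ p : P, Φ.f p ≠ 0) ∧
        ∀ f : PersistenceHom (intervalModule k P I hI) (intervalModule k P J hJ),
          ∃ c : k, ∀ p : P, f.f p = c • Φ.f p := by
    intro GI
    refine ⟨⟨fun p => phiAux k P I J p, ?_⟩, fun p => rfl, ?_, ?_⟩
    · intro p p' h
      ext x
      apply vl_injective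
      show vl ((intervalModule k P J hJ).map h (phiAux k P I J p x))
        = vl (phiAux k P I J p' ((intervalModule k P I hI).map h x))
      have key2 : (if p' ∈ J then (if p ∈ I ∩ J then vl x else 0) else 0)
          = (if p' ∈ I ∩ J then (if p' ∈ I then vl x else 0) else 0) := by
        by_cases hpI : p ∈ I
        · have key : (p' ∈ J ∧ p ∈ J) ↔ (p' ∈ I ∧ p' ∈ J) := by
            constructor
            · rintro ⟨h1, h2⟩
              obtain ⟨q, hqI, hq⟩ := GI.2.2 p' h1
              exact ⟨hI.2 hqI hpI hq h, h1⟩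
            · rintro ⟨h1, h2⟩
              obtain ⟨q', hq'J, hq'⟩ := GI.2.1 p hpI
              exact ⟨h2, hJ.2 h2 hq'J h hq'⟩
          by_cases h1 : p' ∈ J <;> by_cases h2 : p ∈ J <;> by_cases h3 : p' ∈ I <;>
            simp_all [Set.mem_inter_iff]
        · have hx : vl x = 0 := intervalCarrier_eq_zero k P hpI x
          simp [Set.mem_inter_iff, hpI, hx]
      exact key2
    · obtain ⟨p₀, hp₀⟩ := GI.1
      refine ⟨p₀, fun h0 => ?_⟩
      have h1 : (1 : k) = 0 := by
        have e : vl (phiAux k P I J p₀ (oneElt I hp₀.1)) = 1 := by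
          rw [phiAux_val, if_pos hp₀, oneElt_val]
        have h0' : phiAux k P I J p₀ = 0 := h0
        rw [← e, h0']
        rfl
      exact one_ne_zero h1
    · intro f
      obtain ⟨p₀, hp₀⟩ := GI.1
      refine ⟨vl (f.f p₀ (oneElt I hp₀.1)), fun p => ?_⟩
      by_cases hpI : p ∈ I
      · by_cases hpJ : p ∈ J
        · ext x
          apply vl_injective
          have h3 : vl x * vl (f.f p₀ (oneElt I hp₀.1))
              = vl (f.f p₀ (oneElt I hp₀.1)) * (if p ∈ I ∩ J then vl x else 0) := by
            split_ifs with hm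
            · rw [mul_comm]
            · exact absurd ⟨hpI, hpJ⟩ hm
          exact ((hom_val f hpI x).trans
            (by rw [hom_const f hpI hpJ hp₀.1 hp₀.2])).trans h3
        · rw [hom_zero_of_not_mem f (Or.inr hpJ)]
          ext x
          apply vl_injective
          exact (show (0 : k)
              = vl (f.f p₀ (oneElt I hp₀.1)) * (if p ∈ I ∩ J then vl x else 0) from by
            split_ifs with hm
            · exact absurd hm.2 hpJ
            · rw [mul_zero])
      · rw [hom_zero_of_not_mem f (Or.inl hpI)]
        ext x
        apply vl_injective
        exact (show (0 : k)
            = vl (f.f p₀ (oneElt I hp₀.1)) * (if p ∈ I ∩ J then vl x else 0) from by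
          split_ifs with hm
          · exact absurd hm.1 hpI
          · rw [mul_zero])
  refine ⟨⟨?_, fun GI => ?_⟩, part2⟩
  · rintro ⟨f, p, hfp⟩
    have hpI : p ∈ I := by
      by_contra h
      exact hfp (hom_zero_of_not_mem f (Or.inl h))
    have hpJ : p ∈ J := by
      by_contra h
      exact hfp (hom_zero_of_not_mem f (Or.inr h))
    have hc : vl (f.f p (oneElt I hpI)) ≠ 0 := by
      intro h0
      apply hfp
      ext x
      apply vl_injective
      rw [hom_val f hpI x, h0, mul_zero]
      rfl
    refine ⟨⟨p, hpI, hpJ⟩, ?_, ?_⟩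
    · intro q hqI
      rcases le_total q p with h | h
      · exact ⟨p, hpJ, h⟩
      · refine ⟨q, ?_, le_refl q⟩
        by_contra hqJ
        have hc1 := congrArg (fun g => vl (g (oneElt I hqI))) (f.comm h)
        change vl ((intervalModule k P J hJ).map h (f.f q (oneElt I hqI)))
          = vl (f.f p ((intervalModule k P I hI).map h (oneElt I hqI))) at hc1
        have hz : f.f q (oneElt I hqI) = 0 := by
          rw [hom_zero_of_not_mem f (Or.inr hqJ)]; rfl
        have h1 : (intervalModule k P I hI).map h (oneElt I hqI) = oneElt I hpI := by
          apply vl_injective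
          rw [intervalModule_map_val hI h, oneElt_val, oneElt_val, if_pos hpI]
        rw [hz, h1, map_zero] at hc1
        exact hc (by rw [← hc1]; rfl)
    · intro q' hq'J
      rcases le_total p q' with h | h
      · exact ⟨p, hpI, h⟩
      · refine ⟨q', ?_, le_refl q'⟩
        by_contra hq'I
        have hc1 := congrArg (fun g => vl (g (oneElt I hpI))) (f.comm h)
        change vl ((intervalModule k P J hJ).map h (f.f p (oneElt I hpI)))
          = vl (f.f q' ((intervalModule k P I hI).map h (oneElt I hpI))) at hc1
        have hz : (intervalModule k P I hI).map h (oneElt I hpI) = 0 := by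
          apply vl_injective
          rw [intervalModule_map_val hI h, if_neg hq'I]
          rfl
        rw [hz, map_zero] at hc1
        rw [show vl (((intervalModule k P J hJ).map h) (f.f p (oneElt I hpI)))
              = if q' ∈ J then vl (f.f p (oneElt I hpI)) else 0 from rfl,
            if_pos hq'J] at hc1
        exact hc (hc1.trans vl_zero)
  · obtain ⟨Φ, _, hne, _⟩ := part2 GI
    exact ⟨Φ, hne⟩

end Statement0
end

section
/- Let k be a field, P = {q_1 ≺ q_2 ≺ … ≺ q_m} a finite totally ordered set, and M a pointwise finite-dimensional persistence module over P. For p ⪰ p' in P let β_{p,p'} = dim_k Im(ω^{p'}_p : M(p) → M(p')), and adopt the convention β_{q,p'} = 0 whenever q is the formal successor of q_m (i.e. extend M by zero above q_m); for p ≺ q_m write p+1 for the immediate successor of p in P. Then for all p ≻ p' in P, the multiplicity of the interval module k_{(p',p]} in the interval decomposition of M, where (p',p] = {q ∈ P : p ⪰ q ≻ p'}, satisfies μ_{(p',p]}(M) = β_{p+1,p'} − β_{p,p'} + β_{p,p'+1} − β_{p+1,p'+1}. -/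
set_option linter.unusedSectionVars false

open Classical

universe u v w w'

section AuxRange

variable {k₀ : Type u} [Field k₀] {A₀ : Type w'}
variable {M₀ : A₀ → Type w} {N₀ : A₀ → Type w}
variable [∀ a, AddCommGroup (M₀ a)] [∀ a, Module k₀ (M₀ a)]
variable [∀ a, AddCommGroup (N₀ a)] [∀ a, Module k₀ (N₀ a)]

theorem finrank_range_mapRange [Fintype A₀] (f : ∀ a, M₀ a →ₗ[k₀] N₀ a)
    [∀ a, FiniteDimensional k₀ (N₀ a)] :
    Module.finrank k₀ (LinearMap.range (DFinsupp.mapRange.linearMap f)) =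
      ∑ a, Module.finrank k₀ (LinearMap.range (f a)) := by
  classical
  have hmem : ∀ (y : LinearMap.range (DFinsupp.mapRange.linearMap f)) (a : A₀),
      (y : Π₀ a, N₀ a) a ∈ LinearMap.range (f a) := by
    rintro ⟨y, x, rfl⟩ a
    exact ⟨x a, by simp⟩
  let φ : (LinearMap.range (DFinsupp.mapRange.linearMap f)) →ₗ[k₀]
      ∀ a, (LinearMap.range (f a)) :=
    { toFun := fun y a => ⟨(y : Π₀ a, N₀ a) a, hmem y a⟩
      map_add' := fun y z => by funext a; exact Subtype.ext (by simp)
      map_smul' := fun c y => by funext a; exact Subtype.ext (by simp) }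
  have hbij : Function.Bijective φ := by
    constructor
    · intro y z h
      apply Subtype.ext
      apply DFinsupp.ext
      intro a
      exact congrArg Subtype.val (congrFun h a)
    · intro z
      choose x hx using fun a => (z a).2
      let X : Π₀ a, M₀ a := DFinsupp.equivFunOnFintype.symm x
      refine ⟨⟨DFinsupp.mapRange.linearMap f X, ⟨X, rfl⟩⟩, ?_⟩
      funext a
      apply Subtype.ext
      show (DFinsupp.mapRange.linearMap f X) a = (z a : N₀ a)
      have hXa : X a = x a := rfl
      simp [hXa, hx]
  rw [(LinearEquiv.ofBijective φ hbij).finrank_eq, Module.finrank_pi_fintype]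

end AuxRange

section AuxInterval

variable (k : Type u) [Field k] (P : Type v) [LinearOrder P]

theorem finrank_range_intervalMapAux (I : Set P) (p p' : P) :
    Module.finrank k (LinearMap.range (intervalMapAux k P I p p')) =
      if p ∈ I ∧ p' ∈ I then 1 else 0 := by
  by_cases hp' : p' ∈ I
  · by_cases hp : p ∈ I
    · rw [if_pos ⟨hp, hp'⟩]
      have hsurj : Function.Surjective (intervalMapAux k P I p p') := by
        intro y
        refine ⟨⟨(y : k), by simp [intervalCarrier, hp]⟩, ?_⟩
        apply Subtype.ext
        simp [intervalMapAux, hp']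
      rw [LinearMap.range_eq_top.2 hsurj, finrank_top]
      have : Module.finrank k (intervalCarrier k P I p') = 1 := by
        rw [show intervalCarrier k P I p' = ⊤ from if_pos hp', finrank_top, Module.finrank_self]
      exact this
    · rw [if_neg (fun h => hp h.1)]
      have hz : intervalMapAux k P I p p' = 0 := by
        apply LinearMap.ext
        intro x
        have hx := intervalCarrier_eq_zero k P hp x
        apply Subtype.ext
        simp [intervalMapAux, hx]
      rw [hz, LinearMap.range_zero, finrank_bot]
  · rw [if_neg (fun h => hp' h.2)]
    have h0 : Module.finrank k (intervalCarrier k P I p') = 0 := by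
      rw [show intervalCarrier k P I p' = ⊥ from if_neg hp']
      exact finrank_bot k k
    exact Nat.le_zero.mp (le_trans (Submodule.finrank_le _) (le_of_eq h0))

end AuxInterval

section Statement4

variable (k : Type u) [Field k] (P : Type v) [LinearOrder P]

/-- `β_{p,p'}`: the dimension of the image of the structure map `M(p) → M(p')` (for `p' ⪯ p`). -/
noncomputable def beta (M : PersistenceModule.{u,v,w} k P) (p p' : P) : ℕ :=
  if h : p' ≤ p then Module.finrank k (LinearMap.range (M.map h)) else 0

/-- `β` extended by the convention that it vanishes when the first index is the formal
successor `⊤` of the maximum of `P` (i.e. `M` is extended by zero above `P`). -/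
noncomputable def betaT (M : PersistenceModule.{u,v,w} k P) (q : WithTop P) (p' : P) : ℕ :=
  WithTop.recTopCoe 0 (fun r => beta k P M r p') q

/-- for a pointwise finite-dimensional persistence module `M` over a finite
totally ordered set, the multiplicity of the interval module `k_{(p',p]}` in the interval
decomposition of `M` is `β_{p+1,p'} − β_{p,p'} + β_{p,p'+1} − β_{p+1,p'+1}`, where `p+1`
denotes the immediate successor (the formal one, with `β = 0`, when `p` is the maximum). -/
theorem statement4 [Fintype P]
    (M : PersistenceModule.{u,v,w} k P)
    (hfd : ∀ p : P, FiniteDimensional k (M.carrier p))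
    (p p' : P) (hpp' : p' < p)
    (pS : WithTop P)
    (hpS : (pS = ⊤ ∧ ∀ r : P, r ≤ p) ∨
           (∃ q : P, pS = (q : WithTop P) ∧ p < q ∧ ∀ r : P, p < r → q ≤ r))
    (q' : P) (hq' : p' < q' ∧ ∀ r : P, p' < r → q' ≤ r)
    (A : Type w') (I : A → Set P) (hI : ∀ a, IsInterval P (I a))
    (iso : PersistenceIso M (directSumPM k P (fun a => intervalModule k P (I a) (hI a)))) :
    (Nat.card {a : A // I a = Set.Ioc p' p} : ℤ) =
      (betaT k P M pS p' : ℤ) - (beta k P M p p' : ℤ)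
        + (beta k P M p q' : ℤ) - (betaT k P M pS q' : ℤ) := by
  classical
  set N := directSumPM k P (fun a => intervalModule k P (I a) (hI a)) with hNdef
  haveI hNfd : ∀ r : P, FiniteDimensional k (N.carrier r) := by
    intro r
    exact Module.Finite.equiv (iso.e r)
  -- finiteness of the index type
  have hfin : ∀ r : P, Finite {a : A // r ∈ I a} := by
    intro r
    haveI : Module.Finite k (Π₀ a, intervalCarrier k P (I a) r) := hNfd r
    have hli : LinearIndependent k (fun s : {a : A // r ∈ I a} =>
        (DFinsupp.single s.1 ⟨1, by simp [intervalCarrier, s.2]⟩ :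
          Π₀ a, intervalCarrier k P (I a) r)) := by
      rw [linearIndependent_iff']
      intro t g hsum i hi
      have h1 := congrArg (DFinsupp.lapply (R := k) (M := fun a => intervalCarrier k P (I a) r) i.1) hsum
      rw [map_sum, map_zero] at h1
      rw [Finset.sum_eq_single i] at h1
      · simp only [map_smul, DFinsupp.lapply_apply, DFinsupp.single_eq_same] at h1
        have h2 := congrArg Subtype.val h1
        simpa using h2
      · intro j hj hji
        have hne : (↑j : A) ≠ ↑i := fun hc => hji (Subtype.ext hc)
        simp only [map_smul, DFinsupp.lapply_apply]
        rw [DFinsupp.single_eq_of_ne hne.symm, smul_zero]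
      · intro hit
        exact absurd hi hit
    exact hli.finite
  haveI hA : Finite A := by
    have huniv : (Set.univ : Set A).Finite := by
      have hsub : (Set.univ : Set A) ⊆ ⋃ r : P, {a : A | r ∈ I a} := by
        intro a _
        obtain ⟨r, hr⟩ := (hI a).1
        exact Set.mem_iUnion.2 ⟨r, hr⟩
      exact Set.Finite.subset (Set.finite_iUnion fun r => Set.finite_coe_iff.1 (hfin r)) hsub
    exact Set.finite_univ_iff.1 huniv
  haveI : Fintype A := Fintype.ofFinite A
  -- compute beta via the decomposition
  have hbeta : ∀ (x y : P), y ≤ x →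
      beta k P M x y = (Finset.univ.filter (fun a : A => x ∈ I a ∧ y ∈ I a)).card := by
    intro x y h
    rw [beta, dif_pos h]
    have hmap : Submodule.map ((iso.e y : M.carrier y ≃ₗ[k] N.carrier y) :
          M.carrier y →ₗ[k] N.carrier y) (LinearMap.range (M.map h))
        = LinearMap.range (N.map h) := by
      ext z
      constructor
      · rintro ⟨w, ⟨u, rfl⟩, rfl⟩
        exact ⟨iso.e x u, by simpa using (iso.comm h u).symm⟩
      · rintro ⟨u, rfl⟩
        refine ⟨M.map h ((iso.e x).symm u), ⟨_, rfl⟩, ?_⟩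
        simp only [LinearEquiv.coe_coe]
        rw [iso.comm h ((iso.e x).symm u), LinearEquiv.apply_symm_apply]
    rw [← LinearEquiv.finrank_map_eq (iso.e y) (LinearMap.range (M.map h)), hmap]
    have hswap : Module.finrank k (LinearMap.range (N.map h)) =
        Module.finrank k (LinearMap.range (DFinsupp.mapRange.linearMap
          (fun a => intervalMapAux k P (I a) x y))) := rfl
    rw [hswap, finrank_range_mapRange, Finset.card_filter]
    exact Finset.sum_congr rfl (fun a _ => finrank_range_intervalMapAux k P (I a) x y)
  have hq'le : q' ≤ p := hq'.2 p hpp'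
  have hcard : (Nat.card {a : A // I a = Set.Ioc p' p} : ℤ) =
      ∑ a : A, (if I a = Set.Ioc p' p then (1 : ℤ) else 0) := by
    rw [Nat.card_eq_fintype_card, Fintype.card_subtype, Finset.card_filter]
    push_cast
    rfl
  rcases hpS with ⟨hpS, hmax⟩ | ⟨q, hpS, hpq, hqmin⟩
  · -- p is the maximum of P
    rw [hpS]
    have hbT : ∀ y : P, betaT k P M ⊤ y = 0 := fun y => rfl
    rw [hbT, hbT, hbeta p p' (le_of_lt hpp'), hbeta p q' hq'le, hcard,
      Finset.card_filter, Finset.card_filter]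
    push_cast
    have hpt : ∑ a : A, (if I a = Set.Ioc p' p then (1 : ℤ) else 0) =
        ∑ a : A, ((if p ∈ I a ∧ q' ∈ I a then (1 : ℤ) else 0)
          - (if p ∈ I a ∧ p' ∈ I a then (1 : ℤ) else 0)) := by
      refine Finset.sum_congr rfl (fun a _ => ?_)
      have hiff : I a = Set.Ioc p' p ↔ (p ∈ I a ∧ q' ∈ I a ∧ p' ∉ I a) := by
        constructor
        · intro hEq
          simp only [hEq, Set.mem_Ioc]
          exact ⟨⟨hpp', le_refl p⟩, ⟨hq'.1, hq'le⟩, fun hc => lt_irrefl p' hc.1⟩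
        · rintro ⟨h1, h2, h3⟩
          ext x
          simp only [Set.mem_Ioc]
          constructor
          · intro hx
            refine ⟨?_, hmax x⟩
            by_contra hc
            push_neg at hc
            exact h3 ((hI a).2 hx h2 hc (le_of_lt hq'.1))
          · rintro ⟨hx1, hx2⟩
            exact (hI a).2 h2 h1 (hq'.2 x hx1) hx2
      by_cases h1 : p ∈ I a <;> by_cases h2 : p' ∈ I a <;> by_cases h3 : q' ∈ I a <;>
          simp [hiff, h1, h2, h3] <;>
        exact absurd ((hI a).2 h2 h1 (le_of_lt hq'.1) hq'le) h3
    rw [hpt, Finset.sum_sub_distrib]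
    ring
  · -- q is the successor of p
    rw [hpS]
    have hbT : ∀ y : P, betaT k P M (↑q) y = beta k P M q y := fun y => rfl
    have hp'q : p' ≤ q := le_of_lt (lt_trans hpp' hpq)
    have hq'q : q' ≤ q := le_trans hq'le (le_of_lt hpq)
    rw [hbT, hbT, hbeta q p' hp'q, hbeta q q' hq'q,
      hbeta p p' (le_of_lt hpp'), hbeta p q' hq'le, hcard,
      Finset.card_filter, Finset.card_filter, Finset.card_filter, Finset.card_filter]
    push_cast
    have hpt : ∑ a : A, (if I a = Set.Ioc p' p then (1 : ℤ) else 0) =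
        ∑ a : A, ((if q ∈ I a ∧ p' ∈ I a then (1 : ℤ) else 0)
          - (if p ∈ I a ∧ p' ∈ I a then (1 : ℤ) else 0)
          + (if p ∈ I a ∧ q' ∈ I a then (1 : ℤ) else 0)
          - (if q ∈ I a ∧ q' ∈ I a then (1 : ℤ) else 0)) := by
      refine Finset.sum_congr rfl (fun a _ => ?_)
      have hc := (hI a).2
      have f1 : q ∈ I a → p' ∈ I a → p ∈ I a :=
        fun hq hp' => hc hp' hq (le_of_lt hpp') (le_of_lt hpq)
      have f2 : q ∈ I a → p' ∈ I a → q' ∈ I a :=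
        fun hq hp' => hc hp' hq (le_of_lt hq'.1) hq'q
      have f3 : p ∈ I a → p' ∈ I a → q' ∈ I a :=
        fun hp hp' => hc hp' hp (le_of_lt hq'.1) hq'le
      have f4 : q ∈ I a → q' ∈ I a → p ∈ I a :=
        fun hq hq'' => hc hq'' hq hq'le (le_of_lt hpq)
      have hiff : I a = Set.Ioc p' p ↔ (p ∈ I a ∧ q' ∈ I a ∧ p' ∉ I a ∧ q ∉ I a) := by
        constructor
        · intro hEq
          simp only [hEq, Set.mem_Ioc]
          exact ⟨⟨hpp', le_refl p⟩, ⟨hq'.1, hq'le⟩, fun hcc => lt_irrefl p' hcc.1,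
            fun hcc => absurd hcc.2 (not_le.2 hpq)⟩
        · rintro ⟨h1, h2, h3, h4⟩
          ext x
          simp only [Set.mem_Ioc]
          constructor
          · intro hx
            constructor
            · by_contra hcc
              push_neg at hcc
              exact h3 (hc hx h2 hcc (le_of_lt hq'.1))
            · by_contra hcc
              push_neg at hcc
              exact h4 (hc h1 hx (le_of_lt hpq) (hqmin x hcc))
          · rintro ⟨hx1, hx2⟩
            exact hc h2 h1 (hq'.2 x hx1) hx2
      by_cases h1 : p ∈ I a <;> by_cases h2 : p' ∈ I a <;> by_cases h3 : q ∈ I a <;>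
          by_cases h4 : q' ∈ I a <;>
        simp [hiff, h1, h2, h3, h4] <;>
        first
          | exact absurd (f1 h3 h2) h1
          | exact absurd (f2 h3 h2) h4
          | exact absurd (f3 h1 h2) h4
          | exact absurd (f4 h3 h4) h1
    rw [hpt]
    rw [Finset.sum_sub_distrib, Finset.sum_add_distrib, Finset.sum_sub_distrib]

end Statement4
end

section
/- Let k be a field, (P, ⪯) a totally ordered set, and {K_a}_{a∈A} a partition of P into pairwise disjoint intervals covering P. Let M be a pointwise finite-dimensional persistence module over P such that the structure map ω^{p'}_p : M(p) → M(p') is an isomorphism whenever p ⪰ p' lie in the same piece K_a. Then every interval I of P with nonzero multiplicity in the interval decomposition of M is a union of pieces K_a. -/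
set_option linter.unusedSectionVars false

open Classical

universe u v w w'

/-- if `{K_a}` is a partition of `P` into pairwise disjoint intervals and `M` is a
pointwise finite-dimensional persistence module whose structure maps are isomorphisms inside
each piece `K_a`, then every interval occurring (with nonzero multiplicity) in the interval
decomposition of `M` is a union of pieces `K_a`. -/
theorem statement7 (k : Type u) [Field k] (P : Type v) [LinearOrder P]
    {A : Type w'} (K : A → Set P) (hK : ∀ a, IsInterval P (K a))
    (hdisj : ∀ a a' : A, a ≠ a' → Disjoint (K a) (K a'))
    (hcover : (⋃ a, K a) = Set.univ)
    (M : PersistenceModule.{u,v,w} k P)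
    (hfd : ∀ p : P, FiniteDimensional k (M.carrier p))
    (hiso : ∀ (a : A) (p p' : P), p ∈ K a → p' ∈ K a →
        ∀ h : p' ≤ p, Function.Bijective (M.map h))
    (B : Type w'') (I : B → Set P) (hI : ∀ b, IsInterval P (I b))
    (iso : PersistenceIso M (directSumPM k P (fun b => intervalModule k P (I b) (hI b)))) :
    ∀ b : B, ∃ S : Set A, I b = ⋃ a ∈ S, K a := by
  intro b
  set N := directSumPM k P (fun b => intervalModule k P (I b) (hI b)) with hN
  have hNiso : ∀ (a : A) (p p' : P), p ∈ K a → p' ∈ K a →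
      ∀ h : p' ≤ p, Function.Bijective (N.map h) := by
    intro a p p' hp hp' h
    have hb := hiso a p p' hp hp' h
    have key : ∀ x, N.map h ((iso.e p) x) = (iso.e p') (M.map h x) := fun x =>
      (iso.comm h x).symm
    constructor
    · intro x y hxy
      obtain ⟨x', rfl⟩ := (iso.e p).surjective x
      obtain ⟨y', rfl⟩ := (iso.e p).surjective y
      rw [key, key] at hxy
      have := hb.1 ((iso.e p').injective hxy)
      rw [this]
    · intro y
      obtain ⟨y', rfl⟩ := (iso.e p').surjective y
      obtain ⟨x', hx'⟩ := hb.2 y'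
      exact ⟨iso.e p x', by rw [key, hx']⟩
  have key : ∀ (a : A) (p p' : P), p ∈ K a → p' ∈ K a → p ∈ I b → p' ∈ I b := by
    intro a p p' hp hp' hpI
    by_contra hp'I
    have hmem : (1 : k) ∈ intervalCarrier k P (I b) p := by
      simp [intervalCarrier, hpI]
    rcases le_total p' p with h | h
    · have hinj := (hNiso a p p' hp hp' h).1
      set x : intervalCarrier k P (I b) p := ⟨1, hmem⟩ with hx
      have h0 : N.map h (DFinsupp.single b x) = 0 := by
        show DFinsupp.mapRange.linearMap
          (fun b' => intervalMapAux k P (I b') p p') (DFinsupp.single b x) = 0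
        rw [DFinsupp.mapRange.linearMap_apply, DFinsupp.mapRange_single]
        have : intervalMapAux k P (I b) p p' x = 0 := by
          apply Subtype.ext
          simp [intervalMapAux, hp'I]
        rw [this, DFinsupp.single_zero]
      have h1 : N.map h (0 : N.carrier p) = 0 := map_zero _
      have := hinj (h0.trans h1.symm)
      replace this : x = 0 := DFinsupp.single_eq_zero.mp this
      have : (1 : k) = 0 := congrArg Subtype.val this
      exact one_ne_zero this
    · have hsurj := (hNiso a p' p hp' hp h).2
      obtain ⟨v0, hv⟩ := hsurj (DFinsupp.single b (⟨1, hmem⟩ : intervalCarrier k P (I b) p))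
      let v : Π₀ b', intervalCarrier k P (I b') p' := v0
      have hv' : (DFinsupp.mapRange.linearMap
          (fun b' => intervalMapAux k P (I b') p' p) v
            : Π₀ b', intervalCarrier k P (I b') p) =
          DFinsupp.single b (⟨1, hmem⟩ : intervalCarrier k P (I b) p) := hv
      have hvb : (DFinsupp.mapRange.linearMap
          (fun b' => intervalMapAux k P (I b') p' p) v) b =
          (DFinsupp.single b (⟨1, hmem⟩ : intervalCarrier k P (I b) p)
            : Π₀ b', intervalCarrier k P (I b') p) b := by rw [hv']
      rw [DFinsupp.mapRange.linearMap_apply, DFinsupp.mapRange_apply,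
        DFinsupp.single_eq_same] at hvb
      have hz : ((v b : intervalCarrier k P (I b) p') : k) = 0 :=
        intervalCarrier_eq_zero k P hp'I (v b)
      have : (1 : k) = 0 := by
        have := congrArg Subtype.val hvb
        simpa [intervalMapAux, hpI, hz] using this.symm
      exact one_ne_zero this
  refine ⟨{a | ∃ p, p ∈ K a ∧ p ∈ I b}, ?_⟩
  ext q
  constructor
  · intro hq
    have : q ∈ ⋃ a, K a := by rw [hcover]; trivial
    obtain ⟨a, ha⟩ := Set.mem_iUnion.1 this
    exact Set.mem_biUnion ⟨q, ha, hq⟩ ha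
  · intro hq
    obtain ⟨a, ⟨p, hpK, hpI⟩, hqK⟩ := Set.mem_iUnion₂.1 hq
    exact key a p q hpK hqK hpI
end

section
/- Let X be a set, * an element not in X, and d : (X ⊔ {*}) × (X ⊔ {*}) → [0,∞] a symmetric function satisfying the triangle inequality d(x,z) ≤ d(x,y) + d(y,z) for all x, y, z ∈ X ⊔ {*}. For nonempty subsets S, S' ⊆ X define d̂(S,S') = inf over partial matchings 𝒫 between S and S' of sup_{(z,z') ∈ 𝒫} d(z,z'); also set d̂(S,{*}) = sup_{z∈S} d(z,*), d̂({*},S') = sup_{z'∈S'} d(*,z'), and d̂({*},{*}) = 0. Then for all S, S', S'' each either a nonempty subset of X or equal to {*}: d̂(S,S'') ≤ d̂(S,S') + d̂(S',S''). -/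
open Classical ENNReal

/-- A partial matching between the subsets `S ⊆ X` and `S' ⊆ X` (with `*` encoded by
`none`): a set of pairs in `((S ⊔ {*}) × (S' ⊔ {*})) ∖ {(*,*)}` such that every element of
`S` occurs in exactly one pair and every element of `S'` occurs in exactly one pair. -/
def IsPartialMatchingOn {X : Type*} (S S' : Set X)
    (Q : Set (Option X × Option X)) : Prop :=
  ((none : Option X), (none : Option X)) ∉ Q ∧
  (∀ q ∈ Q, (∀ a ∈ q.1, a ∈ S) ∧ (∀ b ∈ q.2, b ∈ S')) ∧
  (∀ a ∈ S, ∃! t : Option X, (some a, t) ∈ Q) ∧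
  (∀ b ∈ S', ∃! s : Option X, (s, some b) ∈ Q)

/-- The matching (pseudo)distance `d̂` between subsets of `X ⊔ {*}` which are either nonempty
subsets of `X` (encoded `some S`) or the singleton `{*}` (encoded `none`):
`d̂(S,S')` is the infimum over partial matchings of the supremum of `d` over the matching,
`d̂(S,{*}) = sup_{z ∈ S} d(z,*)`, `d̂({*},{*}) = 0`. -/
noncomputable def dHat {X : Type*} (d : Option X → Option X → ℝ≥0∞) :
    Option (Set X) → Option (Set X) → ℝ≥0∞
  | some S, some S' =>
      ⨅ (Q : Set (Option X × Option X)) (_ : IsPartialMatchingOn S S' Q),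
        ⨆ (q : Option X × Option X) (_ : q ∈ Q), d q.1 q.2
  | some S, none => ⨆ z ∈ S, d (some z) none
  | none, some S' => ⨆ z ∈ S', d none (some z)
  | none, none => 0

section Aux

variable {X : Type*}

private lemma le_dsup {d : Option X → Option X → ℝ≥0∞} {Q : Set (Option X × Option X)}
    {s t : Option X} (h : (s, t) ∈ Q) :
    d s t ≤ ⨆ (q : Option X × Option X) (_ : q ∈ Q), d q.1 q.2 :=
  le_iSup₂ (f := fun (q : Option X × Option X) (_ : q ∈ Q) => d q.1 q.2) (s, t) h

private lemma le_iInf2_add {ι : Sort*} {p : ι → Prop} {f : ι → ℝ≥0∞} {c x : ℝ≥0∞}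
    (h : ∀ i, p i → x ≤ f i + c) : x ≤ (⨅ i, ⨅ _ : p i, f i) + c := by
  rw [ENNReal.iInf_add]
  refine le_iInf fun i => ?_
  rw [ENNReal.iInf_add]
  exact le_iInf fun hi => h i hi

private lemma le_add_iInf2 {ι : Sort*} {p : ι → Prop} {f : ι → ℝ≥0∞} {c x : ℝ≥0∞}
    (h : ∀ i, p i → x ≤ c + f i) : x ≤ c + (⨅ i, ⨅ _ : p i, f i) := by
  rw [ENNReal.add_iInf]
  refine le_iInf fun i => ?_
  rw [ENNReal.add_iInf]
  exact le_iInf fun hi => h i hi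

private lemma le_iInf2_add_iInf2 {ι κ : Sort*} {p : ι → Prop} {q : κ → Prop}
    {f : ι → ℝ≥0∞} {g : κ → ℝ≥0∞} {x : ℝ≥0∞}
    (h : ∀ i, p i → ∀ j, q j → x ≤ f i + g j) :
    x ≤ (⨅ i, ⨅ _ : p i, f i) + (⨅ j, ⨅ _ : q j, g j) := by
  refine le_iInf2_add fun i hi => ?_
  exact le_add_iInf2 fun j hj => h i hi j hj

/-- The composition of two partial matchings. -/
def compM (Q1 Q2 : Set (Option X × Option X)) : Set (Option X × Option X) :=
  {p | match p with
    | (some a, some c) => ∃ b, (some a, some b) ∈ Q1 ∧ (some b, some c) ∈ Q2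
    | (some a, none) => (some a, none) ∈ Q1 ∨ ∃ b, (some a, some b) ∈ Q1 ∧ (some b, none) ∈ Q2
    | (none, some c) => (none, some c) ∈ Q2 ∨ ∃ b, (none, some b) ∈ Q1 ∧ (some b, some c) ∈ Q2
    | (none, none) => False}

lemma compM_isMatching {A B C : Set X} {Q1 Q2 : Set (Option X × Option X)}
    (h1 : IsPartialMatchingOn A B Q1) (h2 : IsPartialMatchingOn B C Q2) :
    IsPartialMatchingOn A C (compM Q1 Q2) := by
  obtain ⟨-, h1m, h1a, h1b⟩ := h1
  obtain ⟨-, h2m, h2a, h2b⟩ := h2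
  refine ⟨fun h => h, ?_, ?_, ?_⟩
  · rintro ⟨s, t⟩ hq
    cases s with
    | none =>
      cases t with
      | none => exact absurd hq (fun h => h)
      | some c =>
        refine ⟨fun x hx => absurd hx (Option.not_mem_none x), fun x hx => ?_⟩
        obtain rfl : x = c := (Option.mem_some_iff.mp hx).symm
        rcases hq with h | ⟨b, _, hb2⟩
        · exact (h2m _ h).2 _ rfl
        · exact (h2m _ hb2).2 _ rfl
    | some a =>
      cases t with
      | none =>
        refine ⟨fun x hx => ?_, fun x hx => absurd hx (Option.not_mem_none x)⟩
        obtain rfl : x = a := (Option.mem_some_iff.mp hx).symm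
        rcases hq with h | ⟨b, hb1, _⟩
        · exact (h1m _ h).1 _ rfl
        · exact (h1m _ hb1).1 _ rfl
      | some c =>
        obtain ⟨b, hb1, hb2⟩ := hq
        refine ⟨fun x hx => ?_, fun x hx => ?_⟩
        · obtain rfl : x = a := (Option.mem_some_iff.mp hx).symm
          exact (h1m _ hb1).1 _ rfl
        · obtain rfl : x = c := (Option.mem_some_iff.mp hx).symm
          exact (h2m _ hb2).2 _ rfl
  · -- existence and uniqueness for a ∈ A
    intro a ha
    obtain ⟨u, hu, huu⟩ := h1a a ha
    cases u with
    | none =>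
      refine ⟨none, Or.inl hu, ?_⟩
      intro t ht
      cases t with
      | none => rfl
      | some c =>
        obtain ⟨b, hb1, _⟩ := ht
        exact absurd (huu _ hb1) (by simp)
    | some b =>
      have hbB : b ∈ B := (h1m _ hu).2 b rfl
      obtain ⟨v, hv, hvv⟩ := h2a b hbB
      cases v with
      | none =>
        refine ⟨none, Or.inr ⟨b, hu, hv⟩, ?_⟩
        intro t ht
        cases t with
        | none => rfl
        | some c =>
          obtain ⟨b', hb1, hb2⟩ := ht
          obtain rfl : b' = b := by
            have := huu _ hb1; exact (Option.some.injEq _ _).mp this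
          exact absurd (hvv _ hb2) (by simp)
      | some c =>
        refine ⟨some c, ⟨b, hu, hv⟩, ?_⟩
        intro t ht
        cases t with
        | none =>
          rcases ht with h | ⟨b', hb1, hb2⟩
          · exact absurd (huu _ h) (by simp)
          · obtain rfl : b' = b := by
              have := huu _ hb1; exact (Option.some.injEq _ _).mp this
            exact absurd (hvv _ hb2) (by simp)
        | some c' =>
          obtain ⟨b', hb1, hb2⟩ := ht
          obtain rfl : b' = b := by
            have := huu _ hb1; exact (Option.some.injEq _ _).mp this
          exact hvv _ hb2
  · -- existence and uniqueness for c ∈ C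
    intro c hc
    obtain ⟨u, hu, huu⟩ := h2b c hc
    cases u with
    | none =>
      refine ⟨none, Or.inl hu, ?_⟩
      intro s hs
      cases s with
      | none => rfl
      | some a =>
        obtain ⟨b, _, hb2⟩ := hs
        exact absurd (huu _ hb2) (by simp)
    | some b =>
      have hbB : b ∈ B := (h2m _ hu).1 b rfl
      obtain ⟨v, hv, hvv⟩ := h1b b hbB
      cases v with
      | none =>
        refine ⟨none, Or.inr ⟨b, hv, hu⟩, ?_⟩
        intro s hs
        cases s with
        | none => rfl
        | some a =>
          obtain ⟨b', hb1, hb2⟩ := hs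
          obtain rfl : b' = b := by
            have := huu _ hb2; exact (Option.some.injEq _ _).mp this
          exact absurd (hvv _ hb1) (by simp)
      | some a =>
        refine ⟨some a, ⟨b, hv, hu⟩, ?_⟩
        intro s hs
        cases s with
        | none =>
          rcases hs with h | ⟨b', hb1, hb2⟩
          · exact absurd (huu _ h) (by simp)
          · obtain rfl : b' = b := by
              have := huu _ hb2; exact (Option.some.injEq _ _).mp this
            exact absurd (hvv _ hb1) (by simp)
        | some a' =>
          obtain ⟨b', hb1, hb2⟩ := hs
          obtain rfl : b' = b := by
            have := huu _ hb2; exact (Option.some.injEq _ _).mp this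
          exact hvv _ hb1

lemma compM_sup_le {d : Option X → Option X → ℝ≥0∞}
    (htri : ∀ x y z : Option X, d x z ≤ d x y + d y z)
    (Q1 Q2 : Set (Option X × Option X)) :
    (⨆ (q : Option X × Option X) (_ : q ∈ compM Q1 Q2), d q.1 q.2) ≤
      (⨆ (q : Option X × Option X) (_ : q ∈ Q1), d q.1 q.2) +
      (⨆ (q : Option X × Option X) (_ : q ∈ Q2), d q.1 q.2) := by
  refine iSup₂_le ?_
  rintro ⟨s, t⟩ hq
  cases s with
  | none =>
    cases t with
    | none => exact absurd hq (fun h => h)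
    | some c =>
      rcases hq with h | ⟨b, hb1, hb2⟩
      · exact le_add_left (le_dsup h)
      · exact le_trans (htri _ (some b) _) (add_le_add (le_dsup hb1) (le_dsup hb2))
  | some a =>
    cases t with
    | none =>
      rcases hq with h | ⟨b, hb1, hb2⟩
      · exact le_add_right (le_dsup h)
      · exact le_trans (htri _ (some b) _) (add_le_add (le_dsup hb1) (le_dsup hb2))
    | some c =>
      obtain ⟨b, hb1, hb2⟩ := hq
      exact le_trans (htri _ (some b) _) (add_le_add (le_dsup hb1) (le_dsup hb2))

/-- The trivial matching sending everything to `*`. -/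
def trivM (A C : Set X) : Set (Option X × Option X) :=
  {p | match p with
    | (some a, none) => a ∈ A
    | (none, some c) => c ∈ C
    | _ => False}

lemma trivM_isMatching (A C : Set X) : IsPartialMatchingOn A C (trivM A C) := by
  refine ⟨fun h => h, ?_, ?_, ?_⟩
  · rintro ⟨s, t⟩ hq
    cases s with
    | none =>
      cases t with
      | none => exact absurd hq (fun h => h)
      | some c =>
        refine ⟨fun x hx => absurd hx (Option.not_mem_none x), fun x hx => ?_⟩
        obtain rfl : x = c := (Option.mem_some_iff.mp hx).symm
        exact hq
    | some a =>
      cases t with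
      | none =>
        refine ⟨fun x hx => ?_, fun x hx => absurd hx (Option.not_mem_none x)⟩
        obtain rfl : x = a := (Option.mem_some_iff.mp hx).symm
        exact hq
      | some c => exact absurd hq (fun h => h)
  · intro a ha
    refine ⟨none, ha, ?_⟩
    intro t ht
    cases t with
    | none => rfl
    | some c => exact absurd ht (fun h => h)
  · intro c hc
    refine ⟨none, hc, ?_⟩
    intro s hs
    cases s with
    | none => rfl
    | some a => exact absurd hs (fun h => h)

end Aux

/-- if `d` is a symmetric `[0,∞]`-valued function on `X ⊔ {*}` satisfying the
triangle inequality, then `d̂` satisfies the triangle inequality on the collection of all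
nonempty subsets of `X` together with `{*}`. -/
theorem statement11 {X : Type*} (d : Option X → Option X → ℝ≥0∞)
    (hsymm : ∀ x y : Option X, d x y = d y x)
    (htri : ∀ x y z : Option X, d x z ≤ d x y + d y z)
    (S S' S'' : Option (Set X))
    (hS : ∀ T ∈ S, T.Nonempty) (hS' : ∀ T ∈ S', T.Nonempty) (hS'' : ∀ T ∈ S'', T.Nonempty) :
    dHat d S S'' ≤ dHat d S S' + dHat d S' S'' := by
  clear hS hS' hS''
  rcases S with _ | A <;> rcases S' with _ | B <;> rcases S'' with _ | C
  · -- none none none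
    simp [dHat]
  · -- none none (some C)
    simp [dHat]
  · -- none (some B) none
    simp [dHat]
  · -- none (some B) (some C) : sup_{c∈C} d(*,c) ≤ sup_{b∈B} d(*,b) + dHat(B,C)
    show (⨆ z ∈ C, d none (some z)) ≤ (⨆ z ∈ B, d none (some z)) +
      ⨅ (Q : Set (Option X × Option X)) (_ : IsPartialMatchingOn B C Q),
        ⨆ (q : Option X × Option X) (_ : q ∈ Q), d q.1 q.2
    refine le_add_iInf2 fun Q hQ => ?_
    refine iSup₂_le fun c hc => ?_
    obtain ⟨u, hu, -⟩ := hQ.2.2.2 c hc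
    cases u with
    | none => exact le_add_left (le_dsup hu)
    | some b =>
      have hbB : b ∈ B := (hQ.2.1 _ hu).1 b rfl
      refine le_trans (htri _ (some b) _) (add_le_add ?_ (le_dsup hu))
      exact le_iSup₂ (f := fun z (_ : z ∈ B) => d none (some z)) b hbB
  · -- (some A) none none
    show (⨆ z ∈ A, d (some z) none) ≤ (⨆ z ∈ A, d (some z) none) + 0
    simp
  · -- (some A) none (some C) : use the trivial matching
    show (⨅ (Q : Set (Option X × Option X)) (_ : IsPartialMatchingOn A C Q),
        ⨆ (q : Option X × Option X) (_ : q ∈ Q), d q.1 q.2) ≤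
      (⨆ z ∈ A, d (some z) none) + ⨆ z ∈ C, d none (some z)
    refine le_trans (iInf₂_le (trivM A C) (trivM_isMatching A C)) ?_
    refine iSup₂_le ?_
    rintro ⟨s, t⟩ hq
    cases s with
    | none =>
      cases t with
      | none => exact absurd hq (fun h => h)
      | some c =>
        exact le_add_left (le_iSup₂ (f := fun z (_ : z ∈ C) => d none (some z)) c hq)
    | some a =>
      cases t with
      | none =>
        exact le_add_right (le_iSup₂ (f := fun z (_ : z ∈ A) => d (some z) none) a hq)
      | some c => exact absurd hq (fun h => h)
  · -- (some A) (some B) none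
    show (⨆ z ∈ A, d (some z) none) ≤
      (⨅ (Q : Set (Option X × Option X)) (_ : IsPartialMatchingOn A B Q),
        ⨆ (q : Option X × Option X) (_ : q ∈ Q), d q.1 q.2) +
      ⨆ z ∈ B, d (some z) none
    refine le_iInf2_add fun Q hQ => ?_
    refine iSup₂_le fun a ha => ?_
    obtain ⟨u, hu, -⟩ := hQ.2.2.1 a ha
    cases u with
    | none => exact le_add_right (le_dsup hu)
    | some b =>
      have hbB : b ∈ B := (hQ.2.1 _ hu).2 b rfl
      refine le_trans (htri _ (some b) _) (add_le_add (le_dsup hu) ?_)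
      exact le_iSup₂ (f := fun z (_ : z ∈ B) => d (some z) none) b hbB
  · -- (some A) (some B) (some C)
    show (⨅ (Q : Set (Option X × Option X)) (_ : IsPartialMatchingOn A C Q),
        ⨆ (q : Option X × Option X) (_ : q ∈ Q), d q.1 q.2) ≤ _ + _
    refine le_iInf2_add_iInf2 fun Q1 hQ1 Q2 hQ2 => ?_
    refine le_trans (iInf₂_le (compM Q1 Q2) (compM_isMatching hQ1 hQ2)) ?_
    exact compM_sup_le htri Q1 Q2
end

section
/- Let k be a field, (P, ⪯) a totally ordered set, and K = ⊕_{a∈A} k_{I_a} a direct sum of interval modules in which every interval I_a is unbounded below. Let f : K → N be a morphism of persistence modules such that for every p ∈ P there exists p' ⪯ p with f(p') : K(p') → N(p') injective. Then f(p) is injective for every p ∈ P. -/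
set_option linter.unusedSectionVars false

open Classical

universe u v w w'

/-- An interval is bounded below if some point of `P` outside it lies strictly below a point
of it. -/
def BddBelowInterval (P : Type v) [LinearOrder P] (I : Set P) : Prop :=
  ∃ p ∉ I, ∃ p' ∈ I, p < p'

/-- let `K = ⊕_{a} k_{I_a}` with every `I_a` unbounded below, and let
`f : K → N` be a morphism of persistence modules such that for every `p` there is some
`p' ⪯ p` with `f(p')` injective.  Then `f(p)` is injective for every `p`. -/
theorem statement13 (k : Type u) [Field k] (P : Type v) [LinearOrder P]
    {A : Type w'} (I : A → Set P) (hI : ∀ a, IsInterval P (I a))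
    (hub : ∀ a, ¬ BddBelowInterval P (I a))
    (N : PersistenceModule.{u,v,w} k P)
    (f : PersistenceHom (directSumPM k P (fun a => intervalModule k P (I a) (hI a))) N)
    (hinj : ∀ p : P, ∃ p', p' ≤ p ∧ Function.Injective (f.f p')) :
    ∀ p : P, Function.Injective (f.f p) := by
  intro p
  obtain ⟨p', hle, hp'inj⟩ := hinj p
  have hdc : ∀ a, ∀ {q q' : P}, q' ≤ q → q ∈ I a → q' ∈ I a := by
    intro a q q' hle' hq
    by_contra hq'
    rcases lt_or_eq_of_le hle' with h | h
    · exact hub a ⟨q', hq', q, hq, h⟩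
    · exact hq' (h ▸ hq)
  have hKinj : Function.Injective
      ((directSumPM k P (fun a => intervalModule k P (I a) (hI a))).map hle) := by
    intro x y hxy
    change (Π₀ a, intervalCarrier k P (I a) p) at x y
    change DFinsupp.mapRange.linearMap (fun a => intervalMapAux k P (I a) p p') x
      = DFinsupp.mapRange.linearMap (fun a => intervalMapAux k P (I a) p p') y at hxy
    refine DFinsupp.ext fun a => ?_
    have ha : (intervalMapAux k P (I a) p p') (x a) = (intervalMapAux k P (I a) p p') (y a) := by
      have hx := congrArg (fun z => z a) hxy
      simpa using hx
    by_cases hp : p ∈ I a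
    · have hp' : p' ∈ I a := hdc a hle hp
      have := congrArg Subtype.val ha
      simp only [intervalMapAux, LinearMap.coe_mk, AddHom.coe_mk, if_pos hp'] at this
      exact Subtype.ext this
    · have hx0 := intervalCarrier_eq_zero k P hp (x a)
      have hy0 := intervalCarrier_eq_zero k P hp (y a)
      exact Subtype.ext (hx0.trans hy0.symm)
  intro x y hxy
  apply hKinj
  apply hp'inj
  have h1 := LinearMap.congr_fun (f.comm hle) x
  have h2 := LinearMap.congr_fun (f.comm hle) y
  simp only [LinearMap.comp_apply] at h1 h2
  rw [← h1, ← h2, hxy]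
end

section
/- Let k be a field and (P, ⪯) a totally ordered set. Let M = ⊕_{a∈A} k_{I_a} and N = ⊕_{b∈B} k_{J_b} be pointwise finite-dimensional persistence modules over P in which every interval I_a and every interval J_b is unbounded below. If dim_k M(p) = dim_k N(p) for every p ∈ P, then there is a bijection σ : A → B with J_{σ(a)} = I_a for all a ∈ A; in particular M and N are isomorphic. (A decomposition into interval modules with all intervals unbounded below is completely determined by the dimension function.) -/
set_option linter.unusedSectionVars false

open Classical

universe u v w w'

section Aux15

variable {k : Type u} [Field k] {P : Type v} [LinearOrder P]

/-- A basis of the interval carrier, indexed by `PLift (p ∈ I)`. -/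
noncomputable def intervalBasis (k : Type u) [Field k] (P : Type v) [LinearOrder P]
    (I : Set P) (p : P) : Module.Basis (PLift (p ∈ I)) k (intervalCarrier k P I p) :=
  if h : p ∈ I then
    haveI : Unique (PLift (p ∈ I)) := ⟨⟨⟨h⟩⟩, fun _ => rfl⟩
    (Module.Basis.singleton (PLift (p ∈ I)) k).map
      ((Submodule.topEquiv (R := k) (M := k)).symm.trans
        (LinearEquiv.ofEq _ _ (by simp [intervalCarrier, h])))
  else
    haveI : IsEmpty (PLift (p ∈ I)) := ⟨fun x => h x.down⟩
    haveI : Subsingleton (intervalCarrier k P I p) :=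
      ⟨fun x y => Subtype.ext (by
        rw [intervalCarrier_eq_zero k P h x, intervalCarrier_eq_zero k P h y])⟩
    Module.Basis.empty _

theorem aux15_finite_and_finrank {A : Type w'} (I : A → Set P) (p : P)
    [FiniteDimensional k (Π₀ a, intervalCarrier k P (I a) p)] :
    {a : A | p ∈ I a}.Finite ∧
      Module.finrank k (Π₀ a, intervalCarrier k P (I a) p) = {a : A | p ∈ I a}.ncard := by
  classical
  let b := DFinsupp.basis (R := k) (fun a : A => intervalBasis k P (I a) p)
  haveI : Fintype (Σ a : A, PLift (p ∈ I a)) := FiniteDimensional.fintypeBasisIndex b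
  have e := Equiv.sigmaPLiftEquivSubtype (fun a : A => p ∈ I a)
  haveI fin : Finite {a : A // p ∈ I a} := Finite.of_equiv _ e
  have hcard : Nat.card {a : A // p ∈ I a} = ({a : A | p ∈ I a}).ncard :=
    Nat.card_coe_set_eq _
  haveI fin' : Finite ↑{a : A | p ∈ I a} := fin
  refine ⟨Set.toFinite _, ?_⟩
  rw [Module.finrank_eq_card_basis b, ← Nat.card_eq_fintype_card, Nat.card_congr e, hcard]

/-- The cardinality of the fiber of a family of lower sets over a nonempty lower set `S`,
expressed purely in terms of the counting function `p ↦ #{a | p ∈ I a}`. -/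
theorem aux15_fiber_card {A : Type w'} (I : A → Set P)
    (hlow : ∀ a : A, ∀ ⦃q r : P⦄, q ≤ r → r ∈ I a → q ∈ I a)
    (hfin : ∀ p : P, {a : A | p ∈ I a}.Finite)
    (S : Set P) (hSne : S.Nonempty) (hSlow : ∀ ⦃q r : P⦄, q ≤ r → r ∈ S → q ∈ S) :
    {a : A | I a = S}.Finite ∧
      {a : A | I a = S}.ncard =
        sInf ((fun p => {a : A | p ∈ I a}.ncard) '' S) -
          sSup (insert 0 ((fun p => {a : A | p ∈ I a}.ncard) '' Sᶜ)) := by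
  classical
  set g : P → ℕ := fun p => {a : A | p ∈ I a}.ncard with hgdef
  obtain ⟨p1, hp1S, hp1⟩ : ∃ p1 ∈ S, g p1 = sInf (g '' S) := by
    obtain ⟨p1, hp1, hval⟩ := Nat.sInf_mem (hSne.image g)
    exact ⟨p1, hp1, hval⟩
  have hcompl : ∀ ⦃q : P⦄, q ∉ S → ∀ p ∈ S, p ≤ q := fun q hq p hp =>
    le_of_not_gt (fun h => hq (hSlow h.le hp))
  -- Claim 1: the set of `a` with `p1 ∈ I a` is exactly the set of `a` with `S ⊆ I a`.
  have claim1 : {a : A | p1 ∈ I a} = {a : A | S ⊆ I a} := by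
    apply Set.Subset.antisymm
    · intro a ha p hp
      have hq : max p p1 ∈ S := by
        rcases le_total p p1 with h | h
        · rwa [max_eq_right h]
        · rwa [max_eq_left h]
      have hsub : {a : A | max p p1 ∈ I a} ⊆ {a : A | p1 ∈ I a} := fun a' ha' =>
        hlow a' (le_max_right p p1) ha'
      have hle : g p1 ≤ g (max p p1) := hp1 ▸ Nat.sInf_le ⟨max p p1, hq, rfl⟩
      have heq : {a : A | max p p1 ∈ I a} = {a : A | p1 ∈ I a} :=
        Set.eq_of_subset_of_ncard_le hsub hle (hfin p1)
      have hmem : a ∈ {a : A | max p p1 ∈ I a} := by rw [heq]; exact ha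
      exact hlow a (le_max_left p p1) hmem
    · intro a ha
      exact ha hp1S
  set m := sSup (insert 0 (g '' Sᶜ)) with hmdef
  set D : Set A := {a : A | ∃ q, q ∉ S ∧ q ∈ I a} with hDdef
  have hDsub : D ⊆ {a : A | p1 ∈ I a} := by
    rintro a ⟨q, hqS, hqa⟩
    exact hlow a (hcompl hqS p1 hp1S) hqa
  have hbdd : ∀ x ∈ insert 0 (g '' Sᶜ), x ≤ g p1 := by
    rintro x hx
    rcases Set.mem_insert_iff.mp hx with rfl | ⟨q, hq, rfl⟩
    · exact Nat.zero_le _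
    · exact Set.ncard_le_ncard (fun a ha => hlow a (hcompl hq p1 hp1S) ha) (hfin p1)
  have hkey : ∀ ⦃q : P⦄, q ∉ S → g q ≤ m :=
    fun q hq => le_csSup ⟨g p1, fun x hx => hbdd x hx⟩
      (Set.mem_insert_iff.mpr (Or.inr ⟨q, hq, rfl⟩))
  have hm : m ∈ insert 0 (g '' Sᶜ) :=
    Nat.sSup_mem ⟨0, Set.mem_insert _ _⟩ ⟨g p1, fun x hx => hbdd x hx⟩
  have hD : D.Finite ∧ D.ncard = m := by
    by_cases hm0 : m = 0
    · have hDempty : D = ∅ := by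
        ext a
        simp only [Set.mem_empty_iff_false, iff_false]
        rintro ⟨q, hqS, hqa⟩
        have h1 : g q = 0 := Nat.le_zero.mp (hm0 ▸ hkey hqS)
        have h2 : {a : A | q ∈ I a} = ∅ := (Set.ncard_eq_zero (hfin q)).mp h1
        have : a ∈ {a : A | q ∈ I a} := hqa
        rw [h2] at this
        exact this
      rw [hDempty, hm0]
      exact ⟨Set.finite_empty, Set.ncard_empty _⟩
    · rcases Set.mem_insert_iff.mp hm with h0 | ⟨q0, hq0, hq0v⟩
      · exact absurd h0 hm0
      · have hDeq : D = {a : A | q0 ∈ I a} := by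
          apply Set.Subset.antisymm
          · rintro a ⟨q, hqS, hqa⟩
            have hrS : min q q0 ∉ S := by
              rcases le_total q q0 with h | h
              · rwa [min_eq_left h]
              · rwa [min_eq_right h]
            have hsub : {a : A | q0 ∈ I a} ⊆ {a : A | min q q0 ∈ I a} := fun a' ha' =>
              hlow a' (min_le_right q q0) ha'
            have hle : g (min q q0) ≤ g q0 := hq0v ▸ hkey hrS
            have heq : {a : A | q0 ∈ I a} = {a : A | min q q0 ∈ I a} :=
              Set.eq_of_subset_of_ncard_le hsub hle (hfin (min q q0))
            have hmem : a ∈ {a : A | min q q0 ∈ I a} := hlow a (min_le_left q q0) hqa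
            rw [← heq] at hmem
            exact hmem
          · intro a ha
            exact ⟨q0, hq0, ha⟩
        rw [hDeq, ← hq0v]
        exact ⟨hfin q0, rfl⟩
  have hfib : {a : A | I a = S} = {a : A | p1 ∈ I a} \ D := by
    ext a
    constructor
    · intro h
      have h' : I a = S := h
      refine ⟨by rw [Set.mem_setOf_eq, h']; exact hp1S, ?_⟩
      rintro ⟨q, hqS, hqa⟩
      rw [h'] at hqa
      exact hqS hqa
    · rintro ⟨ha, hna⟩
      have hsup : S ⊆ I a := by
        have := claim1 ▸ ha
        exact this
      have hsub : I a ⊆ S := by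
        intro q hq
        by_contra hqS
        exact hna ⟨q, hqS, hq⟩
      exact Set.Subset.antisymm hsub hsup
  constructor
  · rw [hfib]
    exact (hfin p1).subset Set.diff_subset
  · rw [hfib, Set.ncard_diff hDsub hD.1, hD.2]
    exact congrArg (fun t => t - m) hp1

/-- Lower sets from unbounded-below intervals. -/
theorem aux15_lower {I : Set P} (hub : ¬ BddBelowInterval P I) :
    ∀ ⦃q r : P⦄, q ≤ r → r ∈ I → q ∈ I := by
  intro q r hqr hr
  by_contra hq
  rcases lt_or_eq_of_le hqr with h | h
  · exact hub ⟨q, hq, r, hr, h⟩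
  · exact hq (h ▸ hr)

theorem aux15_single_heq {ι : Type w'} {β : ι → Type u} [DecidableEq ι] [∀ i, Zero (β i)]
    {i j : ι} (h : i = j) {x : β i} {y : β j} (hxy : HEq x y) :
    DFinsupp.single i x = DFinsupp.single j y := by
  subst h
  rw [eq_of_heq hxy]

/-- The reindexing map on direct sums of interval modules. -/
noncomputable def aux15_fwd {A : Type w'} {B : Type w''} (I : A → Set P) (J : B → Set P)
    (σ : A ≃ B) (hσ : ∀ a, J (σ a) = I a) (p : P) :
    (Π₀ a, intervalCarrier k P (I a) p) →ₗ[k] Π₀ b, intervalCarrier k P (J b) p :=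
  DFinsupp.lsum ℕ fun a => (DFinsupp.lsingle (σ a)).comp
    (LinearEquiv.ofEq _ _
      (show intervalCarrier k P (I a) p = intervalCarrier k P (J (σ a)) p by
        rw [hσ a])).toLinearMap

theorem aux15_fwd_single {A : Type w'} {B : Type w''} (I : A → Set P) (J : B → Set P)
    (σ : A ≃ B) (hσ : ∀ a, J (σ a) = I a) (p : P) (a : A)
    (x : intervalCarrier k P (I a) p) :
    aux15_fwd (k := k) I J σ hσ p (DFinsupp.single a x) =
      DFinsupp.single (σ a)
        (LinearEquiv.ofEq _ _
          (show intervalCarrier k P (I a) p = intervalCarrier k P (J (σ a)) p by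
            rw [hσ a]) x) := by
  simp [aux15_fwd, DFinsupp.lsum_single]

theorem aux15_inv {A : Type w'} {B : Type w''} (I : A → Set P) (J : B → Set P) (σ : A ≃ B)
    (hσ : ∀ a, J (σ a) = I a) (hσ' : ∀ b, I (σ.symm b) = J b) (p : P) :
    (aux15_fwd (k := k) J I σ.symm hσ' p).comp (aux15_fwd (k := k) I J σ hσ p) = LinearMap.id := by
  apply DFinsupp.lhom_ext'
  intro a
  apply LinearMap.ext
  intro x
  simp only [LinearMap.comp_apply, DFinsupp.lsingle_apply, LinearMap.id_apply,
    aux15_fwd_single]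
  have h : σ.symm (σ a) = a := σ.symm_apply_apply a
  have hc : intervalCarrier k P (I (σ.symm (σ a))) p = intervalCarrier k P (I a) p := by
    rw [h]
  refine aux15_single_heq h ?_
  refine (Subtype.heq_iff_coe_eq ?_).mpr ?_
  · intro z
    rw [hc]
  · simp [LinearEquiv.coe_ofEq_apply]

theorem aux15_comm {A : Type w'} {B : Type w''} (I : A → Set P) (J : B → Set P) (σ : A ≃ B)
    (hσ : ∀ a, J (σ a) = I a) (p p' : P) :
    (aux15_fwd (k := k) I J σ hσ p').comp
        (DFinsupp.mapRange.linearMap fun a => intervalMapAux k P (I a) p p') =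
      (DFinsupp.mapRange.linearMap fun b => intervalMapAux k P (J b) p p').comp
        (aux15_fwd (k := k) I J σ hσ p) := by
  apply DFinsupp.lhom_ext'
  intro a
  apply LinearMap.ext
  intro x
  simp only [LinearMap.comp_apply, DFinsupp.lsingle_apply,
    DFinsupp.mapRange.linearMap_apply, DFinsupp.mapRange_single, aux15_fwd_single]
  apply congrArg
  apply Subtype.ext
  simp [intervalMapAux, hσ a, LinearEquiv.coe_ofEq_apply]

end Aux15

/-- a decomposition of a pointwise finite-dimensional persistence module into
interval modules whose intervals are all unbounded below is completely determined by the
dimension function: if `M = ⊕_a k_{I_a}` and `N = ⊕_b k_{J_b}` with all intervals unbounded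
below and `dim M(p) = dim N(p)` for all `p`, then there is a bijection `σ : A ≃ B` with
`J_{σ(a)} = I_a`; in particular `M ≅ N`. -/
theorem statement15 (k : Type u) [Field k] (P : Type v) [LinearOrder P]
    {A : Type w'} {B : Type w''} (I : A → Set P) (J : B → Set P)
    (hI : ∀ a, IsInterval P (I a)) (hJ : ∀ b, IsInterval P (J b))
    (hIub : ∀ a, ¬ BddBelowInterval P (I a)) (hJub : ∀ b, ¬ BddBelowInterval P (J b))
    (hMfd : ∀ p : P, FiniteDimensional k
      ((directSumPM k P (fun a => intervalModule k P (I a) (hI a))).carrier p))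
    (hNfd : ∀ p : P, FiniteDimensional k
      ((directSumPM k P (fun b => intervalModule k P (J b) (hJ b))).carrier p))
    (hdim : ∀ p : P,
      Module.finrank k ((directSumPM k P (fun a => intervalModule k P (I a) (hI a))).carrier p) =
      Module.finrank k ((directSumPM k P (fun b => intervalModule k P (J b) (hJ b))).carrier p)) :
    (∃ σ : A ≃ B, ∀ a : A, J (σ a) = I a) ∧
    Nonempty (PersistenceIso (directSumPM k P (fun a => intervalModule k P (I a) (hI a)))
      (directSumPM k P (fun b => intervalModule k P (J b) (hJ b)))) := by
  classical
  have hfinI : ∀ p : P, {a : A | p ∈ I a}.Finite := fun p => by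
    haveI : FiniteDimensional k (Π₀ a, intervalCarrier k P (I a) p) := hMfd p
    exact (aux15_finite_and_finrank (k := k) I p).1
  have hfinJ : ∀ p : P, {b : B | p ∈ J b}.Finite := fun p => by
    haveI : FiniteDimensional k (Π₀ b, intervalCarrier k P (J b) p) := hNfd p
    exact (aux15_finite_and_finrank (k := k) J p).1
  have hg : ∀ p : P, {a : A | p ∈ I a}.ncard = {b : B | p ∈ J b}.ncard := fun p => by
    haveI h1 : FiniteDimensional k (Π₀ a, intervalCarrier k P (I a) p) := hMfd p
    haveI h2 : FiniteDimensional k (Π₀ b, intervalCarrier k P (J b) p) := hNfd p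
    have e1 := (aux15_finite_and_finrank (k := k) I p).2
    have e2 := (aux15_finite_and_finrank (k := k) J p).2
    have e3 : Module.finrank k (Π₀ a, intervalCarrier k P (I a) p) =
        Module.finrank k (Π₀ b, intervalCarrier k P (J b) p) := hdim p
    rw [← e1, ← e2, e3]
  have hIlow : ∀ a : A, ∀ ⦃q r : P⦄, q ≤ r → r ∈ I a → q ∈ I a :=
    fun a => aux15_lower (hIub a)
  have hJlow : ∀ b : B, ∀ ⦃q r : P⦄, q ≤ r → r ∈ J b → q ∈ J b :=
    fun b => aux15_lower (hJub b)
  -- fiber cardinality equality for every candidate interval `S`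
  have hfib : ∀ S : Set P, {a : A | I a = S}.Finite ∧ {b : B | J b = S}.Finite ∧
      {a : A | I a = S}.ncard = {b : B | J b = S}.ncard := by
    intro S
    by_cases hS : (∃ a, I a = S) ∨ (∃ b, J b = S)
    · have hSne : S.Nonempty := by
        rcases hS with ⟨a, ha⟩ | ⟨b, hb⟩
        · exact ha ▸ (hI a).1
        · exact hb ▸ (hJ b).1
      have hSlow : ∀ ⦃q r : P⦄, q ≤ r → r ∈ S → q ∈ S := by
        rcases hS with ⟨a, ha⟩ | ⟨b, hb⟩
        · exact ha ▸ hIlow a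
        · exact hb ▸ hJlow b
      obtain ⟨f1, c1⟩ := aux15_fiber_card I hIlow hfinI S hSne hSlow
      obtain ⟨f2, c2⟩ := aux15_fiber_card J hJlow hfinJ S hSne hSlow
      refine ⟨f1, f2, ?_⟩
      rw [c1, c2]
      have hgf : (fun p => {a : A | p ∈ I a}.ncard) = fun p => {b : B | p ∈ J b}.ncard :=
        funext hg
      rw [hgf]
    · push_neg at hS
      obtain ⟨h1, h2⟩ := hS
      have e1 : {a : A | I a = S} = ∅ :=
        Set.eq_empty_iff_forall_notMem.mpr (fun a ha => h1 a ha)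
      have e2 : {b : B | J b = S} = ∅ :=
        Set.eq_empty_iff_forall_notMem.mpr (fun b hb => h2 b hb)
      rw [e1, e2]
      exact ⟨Set.finite_empty, Set.finite_empty, by simp⟩
  -- fiberwise equivalences
  have hequiv : ∀ S : Set P, Nonempty ({a : A // I a = S} ≃ {b : B // J b = S}) := by
    intro S
    obtain ⟨f1, f2, hc⟩ := hfib S
    haveI : Finite {a : A // I a = S} := f1.to_subtype
    haveI : Finite {b : B // J b = S} := f2.to_subtype
    apply Finite.card_eq.mp
    have e1 : Nat.card {a : A // I a = S} = {a : A | I a = S}.ncard :=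
      Nat.card_coe_set_eq _
    have e2 : Nat.card {b : B // J b = S} = {b : B | J b = S}.ncard :=
      Nat.card_coe_set_eq _
    rw [e1, e2, hc]
  let eS : ∀ S : Set P, {a : A // I a = S} ≃ {b : B // J b = S} := fun S => (hequiv S).some
  let σ : A ≃ B := (Equiv.sigmaFiberEquiv I).symm.trans
    ((Equiv.sigmaCongrRight eS).trans (Equiv.sigmaFiberEquiv J))
  have hσ : ∀ a : A, J (σ a) = I a := by
    intro a
    have hs : σ a = (eS (I a) ⟨a, rfl⟩).1 := rfl
    rw [hs]
    exact (eS (I a) ⟨a, rfl⟩).2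
  have hσ' : ∀ b : B, I (σ.symm b) = J b := by
    intro b
    have := hσ (σ.symm b)
    rw [Equiv.apply_symm_apply] at this
    exact this.symm
  refine ⟨⟨σ, hσ⟩, ⟨⟨fun p => LinearEquiv.ofLinear (aux15_fwd (k := k) I J σ hσ p)
      (aux15_fwd (k := k) J I σ.symm hσ' p) ?_ ?_, ?_⟩⟩⟩
  · -- fwd ∘ bwd = id
    exact aux15_inv J I σ.symm hσ' hσ p
  · exact aux15_inv I J σ hσ hσ' p
  · intro p p' h x
    exact LinearMap.congr_fun (aux15_comm I J σ hσ p p') x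
end
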